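/- With T_1, T_2 : Z^(Z) → Z^(Z) defined by T_1 δ_u = -δ_u - δ_{u+1} and T_2 δ_u = δ_u - n δ_{u+1} (n ≥ 1 a fixed integer), the quotient ker((T_1, T_2)) / im((-T_2; T_1)) is the trivial group, where (T_1,T_2)(x,y) = T_1 x + T_2 y and (-T_2; T_1)(z) = (-T_2 z, T_1 z). -/

import Mathlib

theorem skewproduct_K1_trivial (n : ℕ) (hn : 1 ≤ n)
    (T1 T2 : (ℤ →₀ ℤ) →ₗ[ℤ] (ℤ →₀ ℤ))
    (hT1 : ∀ u : ℤ, T1 (Finsupp.single u 1) =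
      -Finsupp.single u 1 - Finsupp.single (u + 1) 1)
    (hT2 : ∀ u : ℤ, T2 (Finsupp.single u 1) =
      Finsupp.single u 1 - (n : ℤ) • Finsupp.single (u + 1) 1) :
    Subsingleton
      (↥(LinearMap.ker (T1.coprod T2)) ⧸
        (LinearMap.range (LinearMap.prod (-T2) T1)).comap
          (LinearMap.ker (T1.coprod T2)).subtype) := by
  set S : (ℤ →₀ ℤ) →ₗ[ℤ] (ℤ →₀ ℤ) := Finsupp.lmapDomain ℤ ℤ (fun u => u + 1) with hSdef
  have hSapp : ∀ (f : ℤ →₀ ℤ) (u : ℤ), (S f) u = f (u - 1) := by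
    intro f u
    have hinj : Function.Injective (fun u : ℤ => u + 1) := fun a b h => by
      simpa using h
    have h1 : u = (fun u : ℤ => u + 1) (u - 1) := by simp
    rw [hSdef]
    simp only [Finsupp.lmapDomain_apply]
    conv_lhs => rw [h1]
    rw [Finsupp.mapDomain_apply hinj]
  have hSsingle : ∀ u : ℤ, S (Finsupp.single u 1) = Finsupp.single (u + 1) 1 := by
    intro u
    rw [hSdef, Finsupp.lmapDomain_apply, Finsupp.mapDomain_single]
  have hT1eq : T1 = -(LinearMap.id + S) := by
    apply Finsupp.lhom_ext
    intro u b
    have hb : (Finsupp.single u b : ℤ →₀ ℤ) = b • Finsupp.single u 1 := by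
      rw [Finsupp.smul_single, smul_eq_mul, mul_one]
    rw [hb, map_smul, map_smul, hT1 u]
    simp only [LinearMap.neg_apply, LinearMap.add_apply, LinearMap.id_apply, hSsingle u]
    module
  have hT2eq : T2 = LinearMap.id - (n : ℤ) • S := by
    apply Finsupp.lhom_ext
    intro u b
    have hb : (Finsupp.single u b : ℤ →₀ ℤ) = b • Finsupp.single u 1 := by
      rw [Finsupp.smul_single, smul_eq_mul, mul_one]
    rw [hb, map_smul, map_smul, hT2 u]
    simp only [LinearMap.sub_apply, LinearMap.id_apply, LinearMap.smul_apply, hSsingle u]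
  have hT1p : ∀ (f : ℤ →₀ ℤ) (u : ℤ), (T1 f) u = -(f u) - f (u - 1) := by
    intro f u
    rw [hT1eq]
    simp only [LinearMap.neg_apply, LinearMap.add_apply, LinearMap.id_apply,
      Finsupp.neg_apply, Finsupp.add_apply, hSapp]
    ring
  have hT2p : ∀ (f : ℤ →₀ ℤ) (u : ℤ), (T2 f) u = f u - (n : ℤ) * f (u - 1) := by
    intro f u
    rw [hT2eq]
    simp only [LinearMap.sub_apply, LinearMap.id_apply, LinearMap.smul_apply,
      Finsupp.sub_apply, Finsupp.smul_apply, hSapp, smul_eq_mul]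
  rw [Submodule.Quotient.subsingleton_iff, Submodule.eq_top_iff']
  rintro ⟨⟨x, y⟩, hxy⟩
  rw [Submodule.mem_comap]
  have hxy' : T1 x + T2 y = 0 := by
    have := hxy
    rwa [LinearMap.mem_ker, LinearMap.coprod_apply] at this
  -- pointwise relation
  have hrel : ∀ u : ℤ, x u + x (u - 1) = y u - (n : ℤ) * y (u - 1) := by
    intro u
    have := DFunLike.congr_fun hxy' u
    simp only [Finsupp.add_apply, Finsupp.coe_zero, Pi.zero_apply, hT1p, hT2p] at this
    linarith
  -- bounds
  set s : Finset ℤ := x.support ∪ y.support with hsdef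
  obtain ⟨B0, hB0⟩ := s.exists_le
  obtain ⟨A0, hA0⟩ := (s.image (fun v => -v)).exists_le
  set A : ℤ := -A0 - 1 with hAdef
  set B : ℤ := B0 + 1 with hBdef
  have hA : ∀ v : ℤ, v ≤ A → x v = 0 ∧ y v = 0 := by
    intro v hv
    constructor <;> by_contra h
    · have : v ∈ s := Finset.mem_union_left _ (Finsupp.mem_support_iff.mpr h)
      have := hA0 (-v) (Finset.mem_image_of_mem _ this)
      omega
    · have : v ∈ s := Finset.mem_union_right _ (Finsupp.mem_support_iff.mpr h)
      have := hA0 (-v) (Finset.mem_image_of_mem _ this)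
      omega
  have hB : ∀ v : ℤ, B ≤ v → x v = 0 ∧ y v = 0 := by
    intro v hv
    constructor <;> by_contra h
    · have := hB0 v (Finset.mem_union_left _ (Finsupp.mem_support_iff.mpr h))
      omega
    · have := hB0 v (Finset.mem_union_right _ (Finsupp.mem_support_iff.mpr h))
      omega
  -- the explicit preimage function
  set W : ℤ → ℤ := fun u => ∑ v ∈ x.support, if v ≤ u then (n : ℤ) ^ (u - v).toNat * x v else 0
    with hWdef
  have key0 : ∀ u : ℤ, u ≤ A → W u = 0 := by
    intro u hu
    rw [hWdef]
    apply Finset.sum_eq_zero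
    intro v hv
    rw [if_neg]
    intro hvu
    exact Finsupp.mem_support_iff.mp hv ((hA v (hvu.trans hu)).1)
  have key1 : ∀ u : ℤ, W u - (n : ℤ) * W (u - 1) = x u := by
    intro u
    rw [hWdef]
    simp only
    rw [Finset.mul_sum, ← Finset.sum_sub_distrib]
    have : ∀ v ∈ x.support,
        ((if v ≤ u then (n : ℤ) ^ (u - v).toNat * x v else 0) -
          (n : ℤ) * (if v ≤ u - 1 then (n : ℤ) ^ (u - 1 - v).toNat * x v else 0)) =
        (if v = u then x v else 0) := by
      intro v _
      rcases lt_trichotomy v u with hlt | heq | hgt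
      · rw [if_pos hlt.le, if_pos (by omega), if_neg (by omega)]
        have : (u - v).toNat = (u - 1 - v).toNat + 1 := by omega
        rw [this, pow_succ]
        ring
      · subst heq
        rw [if_pos le_rfl, if_neg (by omega), if_pos rfl]
        simp
      · rw [if_neg (by omega), if_neg (by omega), if_neg (by omega)]
        ring
    rw [Finset.sum_congr rfl this, Finset.sum_ite_eq' x.support u (fun v => x v)]
    by_cases hu : u ∈ x.support
    · rw [if_pos hu]
    · rw [if_neg hu, eq_comm]
      exact Finsupp.notMem_support_iff.mp hu
  have key2 : ∀ u : ℤ, W u + W (u - 1) = y u := by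
    have hV : ∀ u : ℤ, A ≤ u → W u + W (u - 1) - y u = 0 := by
      have base : W A + W (A - 1) - y A = 0 := by
        rw [key0 A le_rfl, key0 (A - 1) (by omega), (hA A le_rfl).2]
        ring
      have step : ∀ m : ℤ, A ≤ m → W m + W (m - 1) - y m = 0 →
          W (m + 1) + W (m + 1 - 1) - y (m + 1) = 0 := by
        intro m hm ih
        have h1 := key1 (m + 1)
        have h2 := key1 m
        have h3 := hrel (m + 1)
        have hmm : m + 1 - 1 = m := by ring
        rw [hmm] at h1 h3 ⊢
        linear_combination h1 + h2 + h3 + (n : ℤ) * ih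
      exact fun u hu => Int.le_induction (motive := fun u _ => W u + W (u - 1) - y u = 0) base step u hu
    intro u
    rcases le_or_gt A u with h | h
    · have := hV u h
      linarith
    · rw [key0 u h.le, key0 (u - 1) (by omega), ((hA u h.le).2)]
      ring
  have key3 : ∀ u : ℤ, B ≤ u → W u = 0 := by
    intro u hu
    have h1 := key1 (u + 1)
    have h2 := key2 (u + 1)
    have : u + 1 - 1 = u := by ring
    rw [this] at h1 h2
    rw [(hB (u + 1) (by omega)).1] at h1
    rw [(hB (u + 1) (by omega)).2] at h2
    have hn1 : ((n : ℤ) + 1) * W u = 0 := by linarith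
    have : (n : ℤ) + 1 ≠ 0 := by positivity
    exact (mul_eq_zero.mp hn1).resolve_left this
  -- package W as a finsupp
  set w : ℤ →₀ ℤ := Finsupp.onFinset (Finset.Icc A B) W (by
    intro u hu
    rw [Finset.mem_Icc]
    constructor
    · by_contra h
      exact hu (key0 u (by omega))
    · by_contra h
      exact hu (key3 u (by omega))) with hwdef
  have hwapp : ∀ u : ℤ, w u = W u := fun u => rfl
  have h2 : T2 w = x := by
    ext u
    rw [hT2p w u, hwapp, hwapp, key1]
  have h1 : T1 w = -y := by
    ext u
    rw [hT1p w u, hwapp, hwapp]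
    have := key2 u
    simp only [Finsupp.neg_apply]
    linarith
  refine ⟨-w, ?_⟩
  simp only [Submodule.subtype_apply, LinearMap.prod_apply, Function.prod, LinearMap.neg_apply,
    map_neg, neg_neg, h1, h2, Prod.neg_mk]
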